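/- Let d be a positive integer, T ∈ M_{2^n} with ‖T‖_∞ ≤ 1, and let J be a random subset of [n] where each element is included independently with probability 1/d. Then 𝔼_J[Σ_{j∈J} ‖R_j^J(T)‖₂²] ≥ (1/8) Σ_{s: d ≤ |supp(s)| < 2d} |T̂(s)|². -/

import Mathlib

open scoped BigOperators ComplexOrder
open Matrix

noncomputable section

abbrev QM (n : ℕ) := Matrix (Fin n → Fin 2) (Fin n → Fin 2) ℂ

namespace QM

variable {n : ℕ}

/-- Normalized trace on `M_{2^n}`. -/
def qtr (T : QM n) : ℂ := Matrix.trace T / 2 ^ n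

/-- Singular values of `T` (eigenvalues of `|T| = (TᴴT)^{1/2}`). -/
def sv (T : QM n) (i : Fin n → Fin 2) : ℝ :=
  Real.sqrt ((Matrix.posSemidef_conjTranspose_mul_self T).1.eigenvalues i)

/-- Normalized Schatten `p`-norm: `(tr |T|^p)^{1/p}` with normalized trace. -/
def snorm (p : ℝ) (T : QM n) : ℝ :=
  ((∑ i, sv T i ^ p) / 2 ^ n) ^ (1 / p)

/-- Squared normalized `L₂`-norm: `tr(TᴴT)`. -/
def l2sq (T : QM n) : ℝ := (Matrix.trace (Tᴴ * T)).re / 2 ^ n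

/-- Variance `‖T - tr(T)1‖₂²`. -/
def qvar (T : QM n) : ℝ := l2sq (T - qtr T • 1)

/-- Operator norm. -/
def opnorm (T : QM n) : ℝ := ‖Matrix.toEuclideanCLM (𝕜 := ℂ) T‖

/-- The Pauli matrices. -/
def pauli : Fin 4 → Matrix (Fin 2) (Fin 2) ℂ
  | 0 => 1
  | 1 => !![1, 0; 0, -1]
  | 2 => !![0, 1; 1, 0]
  | 3 => !![0, Complex.I; -Complex.I, 0]

/-- The Pauli tensor basis `σ_s` for `s ∈ {0,1,2,3}^n`. -/
def sigma (s : Fin n → Fin 4) : QM n :=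
  Matrix.of fun x y => ∏ j, pauli (s j) (x j) (y j)

/-- Fourier coefficient `T̂(s) = tr(σ_s* T)`. -/
def fc (T : QM n) (s : Fin n → Fin 4) : ℂ := qtr ((sigma s)ᴴ * T)

/-- Support of a multi-index. -/
def supp (s : Fin n → Fin 4) : Finset (Fin n) := Finset.univ.filter fun j => s j ≠ 0

/-- The `k`-th partial derivative, via the Fourier expansion. -/
def djF (k : Fin n) (T : QM n) : QM n :=
  ∑ s ∈ Finset.univ.filter (fun s : Fin n → Fin 4 => s k ≠ 0), fc T s • sigma s

/-- Conditional expectation onto the subalgebra `M_J`. -/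
def condExp (J : Finset (Fin n)) (T : QM n) : QM n :=
  ∑ s ∈ Finset.univ.filter (fun s : Fin n → Fin 4 => supp s ⊆ J), fc T s • sigma s

/-- The restriction operator `R_j^J(T) = 𝓔_{M_{J^c ∪ {j}}}(d_j(T))`. -/
def RR (J : Finset (Fin n)) (j : Fin n) (T : QM n) : QM n :=
  condExp (Jᶜ ∪ {j}) (djF j T)

/-- The operator `δ^𝓛`. -/
def deltaL (δ : ℝ) (T : QM n) : QM n :=
  ∑ s : Fin n → Fin 4, (((δ : ℂ) ^ (supp s).card) * fc T s) • sigma s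

/-- The quantum Ornstein–Uhlenbeck semigroup `e^{-t𝓛}`. -/
def heat (t : ℝ) (T : QM n) : QM n :=
  ∑ s : Fin n → Fin 4, ((Real.exp (-t * (supp s).card) : ℂ) * fc T s) • sigma s

/-- `H_d(T) = (1-1/(2d))^𝓛(T) - (1-1/d)^𝓛(T)`. -/
def Hd (d : ℕ) (T : QM n) : QM n :=
  deltaL (1 - 1 / (2 * (d : ℝ))) T - deltaL (1 - 1 / (d : ℝ)) T

/-- Probability of a subset `J` when each coordinate is included with probability `δ`. -/
def mu (δ : ℝ) (J : Finset (Fin n)) : ℝ := δ ^ J.card * (1 - δ) ^ (n - J.card)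

/-- Total `L₂`-influence via Fourier coefficients. -/
def InfF (T : QM n) : ℝ := ∑ s : Fin n → Fin 4, ((supp s).card : ℝ) * ‖fc T s‖ ^ 2

/-- Spectral weight `W_{≈d}(T)`. -/
def Wapprox (T : QM n) (d : ℕ) : ℝ :=
  ∑ s ∈ Finset.univ.filter
      (fun s : Fin n → Fin 4 => d ≤ (supp s).card ∧ (supp s).card < 2 * d),
    ‖fc T s‖ ^ 2

/-- Conditional expectation onto the algebra with identity in slot `j`
(`id ⊗ ⋯ ⊗ tr(·)1₂ ⊗ ⋯ ⊗ id`). -/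
def slotExp (j : Fin n) (T : QM n) : QM n :=
  Matrix.of fun x y =>
    if x j = y j then (∑ b : Fin 2, T (Function.update x j b) (Function.update y j b)) / 2
    else 0

/-- The `j`-th partial derivative `d_j = id - (id ⊗ ⋯ ⊗ tr(·)1₂ ⊗ ⋯ ⊗ id)`. -/
def dj (j : Fin n) (T : QM n) : QM n := T - slotExp j T

end QM

namespace QM
lemma pauli_orth (k l : Fin 4) :
    (∑ p : Fin 2 × Fin 2, (starRingEnd ℂ) (pauli k p.1 p.2) * pauli l p.1 p.2)
      = if k = l then 2 else 0 := by
  fin_cases k <;> fin_cases l <;>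
    simp [pauli, Fintype.sum_prod_type, Fin.sum_univ_two, Complex.ext_iff] <;> norm_num

lemma pauli_complete (a b c e : Fin 2) :
    (∑ k : Fin 4, (starRingEnd ℂ) (pauli k a b) * pauli k c e)
      = if a = c ∧ b = e then 2 else 0 := by
  fin_cases a <;> fin_cases b <;> fin_cases c <;> fin_cases e <;>
    simp [pauli, Fin.sum_univ_four, Complex.ext_iff] <;> norm_num
end QM

namespace QM
variable {n : ℕ}

lemma trace_sigma_mul (s t : Fin n → Fin 4) :
    Matrix.trace ((sigma s)ᴴ * sigma t) = if s = t then (2:ℂ)^n else 0 := by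
  have h1 : Matrix.trace ((sigma s)ᴴ * sigma t)
      = ∑ x : Fin n → Fin 2, ∑ y : Fin n → Fin 2,
          ∏ j, (starRingEnd ℂ) (pauli (s j) (y j) (x j)) * pauli (t j) (y j) (x j) := by
    simp only [Matrix.trace, Matrix.diag, Matrix.mul_apply, Matrix.conjTranspose_apply, sigma,
      Matrix.of_apply, Complex.star_def, map_prod, ← Finset.prod_mul_distrib]
  rw [h1]
  have h2 : ∀ x : Fin n → Fin 2,
      (∑ y : Fin n → Fin 2, ∏ j, (starRingEnd ℂ) (pauli (s j) (y j) (x j)) * pauli (t j) (y j) (x j))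
        = ∏ j, ∑ b : Fin 2, (starRingEnd ℂ) (pauli (s j) b (x j)) * pauli (t j) b (x j) := by
    intro x
    rw [Fintype.prod_sum (fun j b => (starRingEnd ℂ) (pauli (s j) b (x j)) * pauli (t j) b (x j))]
  simp only [h2]
  rw [← Fintype.prod_sum (fun (j : Fin n) (a : Fin 2) => ∑ b : Fin 2,
      (starRingEnd ℂ) (pauli (s j) b a) * pauli (t j) b a)]
  have h3 : ∀ j : Fin n, (∑ a : Fin 2, ∑ b : Fin 2,
      (starRingEnd ℂ) (pauli (s j) b a) * pauli (t j) b a) = if s j = t j then 2 else 0 := by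
    intro j
    rw [← pauli_orth (s j) (t j), Fintype.sum_prod_type]
    rw [Finset.sum_comm]
  rw [Finset.prod_congr rfl (fun j _ => h3 j)]
  by_cases h : s = t
  · simp [h]
  · obtain ⟨j, hj⟩ := Function.ne_iff.mp h
    rw [if_neg h]
    exact Finset.prod_eq_zero (Finset.mem_univ j) (by rw [if_neg hj])

end QM

namespace QM
variable {n : ℕ}

lemma two_pow_ne : ((2:ℂ)^n) ≠ 0 := pow_ne_zero _ two_ne_zero

lemma fc_expand (S : Finset (Fin n → Fin 4)) (c : (Fin n → Fin 4) → ℂ) (s : Fin n → Fin 4) :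
    fc (∑ t ∈ S, c t • sigma t) s = if s ∈ S then c s else 0 := by
  unfold fc qtr
  rw [Matrix.mul_sum]
  simp only [Matrix.mul_smul, Matrix.trace_sum, Matrix.trace_smul, trace_sigma_mul, smul_eq_mul,
    mul_ite, mul_zero]
  simp only [eq_comm (a := s), Finset.sum_ite_eq' S s (fun t => c t * 2^n)]
  by_cases h : s ∈ S
  · rw [if_pos h, if_pos h, mul_div_assoc, div_self two_pow_ne, mul_one]
  · rw [if_neg h, if_neg h, zero_div]

lemma sigma_sum_complete (u x a b : Fin n → Fin 2) :
    (∑ s : Fin n → Fin 4, (starRingEnd ℂ) (sigma s u x) * sigma s a b)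
      = if u = a ∧ x = b then (2:ℂ)^n else 0 := by
  have h1 : ∀ s : Fin n → Fin 4, (starRingEnd ℂ) (sigma s u x) * sigma s a b
      = ∏ j, (starRingEnd ℂ) (pauli (s j) (u j) (x j)) * pauli (s j) (a j) (b j) := by
    intro s; simp [sigma, map_prod, ← Finset.prod_mul_distrib]
  simp only [h1]
  rw [← Fintype.prod_sum (fun (j : Fin n) (k : Fin 4) =>
      (starRingEnd ℂ) (pauli k (u j) (x j)) * pauli k (a j) (b j))]
  simp only [pauli_complete]
  by_cases h : u = a ∧ x = b
  · simp [h.1, h.2]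
  · rw [if_neg h]
    have hex : ∃ j, ¬(u j = a j ∧ x j = b j) := by
      by_contra hc
      push_neg at hc
      exact h ⟨funext fun j => (hc j).1, funext fun j => (hc j).2⟩
    obtain ⟨j, hj⟩ := hex
    exact Finset.prod_eq_zero (Finset.mem_univ j) (if_neg hj)

end QM
namespace QM
variable {n : ℕ}

lemma sigma_expand (T : QM n) : ∑ s : Fin n → Fin 4, fc T s • sigma s = T := by
  ext a b
  simp only [Matrix.sum_apply, Matrix.smul_apply, smul_eq_mul]
  have hfc : ∀ s, fc T s * sigma s a b = (∑ x : Fin n → Fin 2, ∑ u : Fin n → Fin 2,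
      ((starRingEnd ℂ) (sigma s u x) * sigma s a b) * T u x) / 2^n := by
    intro s
    unfold fc qtr
    rw [div_mul_eq_mul_div]
    congr 1
    have htr : Matrix.trace ((sigma s)ᴴ * T)
        = ∑ x : Fin n → Fin 2, ∑ u : Fin n → Fin 2, (starRingEnd ℂ) (sigma s u x) * T u x := by
      simp only [Matrix.trace, Matrix.diag, Matrix.mul_apply, Matrix.conjTranspose_apply,
        Complex.star_def]
    rw [htr, Finset.sum_mul]
    refine Finset.sum_congr rfl fun x _ => ?_
    rw [Finset.sum_mul]
    refine Finset.sum_congr rfl fun u _ => ?_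
    ring
  simp only [hfc]
  rw [← Finset.sum_div]
  rw [Finset.sum_comm]
  have hin : ∀ x : Fin n → Fin 2, (∑ s : Fin n → Fin 4, ∑ u : Fin n → Fin 2,
      ((starRingEnd ℂ) (sigma s u x) * sigma s a b) * T u x)
      = ∑ u : Fin n → Fin 2, (if u = a ∧ x = b then (2:ℂ)^n else 0) * T u x := by
    intro x
    rw [Finset.sum_comm]
    refine Finset.sum_congr rfl fun u _ => ?_
    rw [← Finset.sum_mul, sigma_sum_complete]
  simp only [hin, ite_mul, zero_mul, ite_and, Finset.sum_ite_eq', Finset.mem_univ, if_true]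
  rw [mul_comm, mul_div_assoc, div_self two_pow_ne, mul_one]

end QM
namespace QM
variable {n : ℕ}

lemma l2sq_eq_sum (T : QM n) : l2sq T = ∑ s : Fin n → Fin 4, ‖fc T s‖^2 := by
  have hTH : Tᴴ = ∑ s : Fin n → Fin 4, (starRingEnd ℂ) (fc T s) • (sigma s)ᴴ := by
    conv_lhs => rw [← sigma_expand T]
    rw [Matrix.conjTranspose_sum]
    refine Finset.sum_congr rfl fun s _ => ?_
    rw [Matrix.conjTranspose_smul]
    rfl
  have htr : ∀ s : Fin n → Fin 4, Matrix.trace ((sigma s)ᴴ * T) = (2:ℂ)^n * fc T s := by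
    intro s
    unfold fc qtr
    rw [mul_div_assoc', mul_comm, mul_div_assoc, div_self two_pow_ne, mul_one]
  have key : Matrix.trace (Tᴴ * T) = (((2:ℝ)^n * ∑ s : Fin n → Fin 4, ‖fc T s‖^2 : ℝ) : ℂ) := by
    rw [hTH, Matrix.sum_mul]
    simp only [Matrix.smul_mul, Matrix.trace_sum, Matrix.trace_smul, smul_eq_mul, htr]
    push_cast
    rw [Finset.mul_sum]
    refine Finset.sum_congr rfl fun s _ => ?_
    rw [show (starRingEnd ℂ) (fc T s) * ((2:ℂ)^n * fc T s)
        = (2:ℂ)^n * (fc T s * (starRingEnd ℂ) (fc T s)) by ring, Complex.mul_conj]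
    norm_cast
    rw [Complex.normSq_eq_norm_sq]
  unfold l2sq
  rw [key, Complex.ofReal_re, mul_comm, mul_div_assoc, div_self (by positivity : ((2:ℝ)^n) ≠ 0),
    mul_one]

lemma l2sq_combo (S : Finset (Fin n → Fin 4)) (c : (Fin n → Fin 4) → ℂ) :
    l2sq (∑ t ∈ S, c t • sigma t) = ∑ t ∈ S, ‖c t‖^2 := by
  rw [l2sq_eq_sum]
  simp only [fc_expand, apply_ite norm, norm_zero]
  have h : ∀ s, (if s ∈ S then ‖c s‖ else 0)^2 = if s ∈ S then ‖c s‖^2 else 0 := by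
    intro s; split <;> simp
  simp only [h, Finset.sum_ite_mem, Finset.univ_inter]

end QM
namespace QM
variable {n : ℕ}

lemma l2sq_RR (J : Finset (Fin n)) (j : Fin n) (T : QM n) :
    l2sq (RR J j T) = ∑ s ∈ Finset.univ.filter
        (fun s : Fin n → Fin 4 => supp s ⊆ Jᶜ ∪ {j} ∧ s j ≠ 0), ‖fc T s‖^2 := by
  unfold RR condExp
  have hfc : ∀ s : Fin n → Fin 4, fc (djF j T) s
      = if s j ≠ 0 then fc T s else 0 := by
    intro s
    unfold djF
    rw [fc_expand]
    simp
  simp only [hfc]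
  rw [l2sq_combo]
  have h : ∀ s : Fin n → Fin 4, ‖if s j ≠ 0 then fc T s else 0‖^2
      = if s j ≠ 0 then ‖fc T s‖^2 else 0 := by
    intro s; split <;> simp
  simp only [h]
  rw [← Finset.sum_filter, Finset.filter_filter]

end QM

namespace QM
variable {n : ℕ}

lemma powerset_binom (δ : ℝ) (s : Finset (Fin n)) :
    ∑ K ∈ s.powerset, δ^K.card * (1-δ)^(s.card - K.card) = 1 := by
  have h := Finset.prod_add (fun _ : Fin n => δ) (fun _ : Fin n => 1-δ) s
  simp only [Finset.prod_const] at h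
  rw [show δ + (1-δ) = 1 by ring, one_pow] at h
  refine Eq.trans (Finset.sum_congr rfl fun K hK => ?_) h.symm
  rw [Finset.card_sdiff_of_subset (Finset.mem_powerset.mp hK)]

lemma cond_iff {J : Finset (Fin n)} {j : Fin n} (hj : j ∈ J) (s : Fin n → Fin 4) :
    (supp s ⊆ Jᶜ ∪ {j} ∧ s j ≠ 0) ↔ supp s ∩ J = {j} := by
  simp only [supp, Finset.subset_iff, Finset.ext_iff, Finset.mem_inter, Finset.mem_filter,
    Finset.mem_univ, true_and, Finset.mem_union, Finset.mem_compl, Finset.mem_singleton]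
  constructor
  · rintro ⟨hsub, hsj⟩ i
    constructor
    · rintro ⟨hi, hiJ⟩
      rcases hsub hi with h | h
      · exact absurd hiJ h
      · exact h
    · rintro rfl; exact ⟨hsj, hj⟩
  · intro h
    refine ⟨fun i hi => ?_, ((h j).mpr rfl).1⟩
    by_cases hiJ : i ∈ J
    · exact Or.inr ((h i).mp ⟨hi, hiJ⟩)
    · exact Or.inl hiJ

lemma sum_ite_inter (A J : Finset (Fin n)) (r : ℝ) :
    (∑ j ∈ J, if A ∩ J = {j} then r else 0) = ∑ j ∈ A, if A ∩ J = {j} then r else 0 := by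
  rw [Finset.sum_subset (Finset.subset_univ J) (fun x _ hx => if_neg (fun h => hx (by
      have : x ∈ A ∩ J := by rw [h]; exact Finset.mem_singleton_self x
      exact (Finset.mem_inter.mp this).2))),
    Finset.sum_subset (Finset.subset_univ A) (fun x _ hx => if_neg (fun h => hx (by
      have : x ∈ A ∩ J := by rw [h]; exact Finset.mem_singleton_self x
      exact (Finset.mem_inter.mp this).1)))]

lemma prob_single (δ : ℝ) (A : Finset (Fin n)) (j : Fin n) (hj : j ∈ A) :
    ∑ J : Finset (Fin n), mu δ J * (if A ∩ J = {j} then (1:ℝ) else 0)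
      = δ * (1-δ)^(A.card - 1) := by
  simp only [mul_ite, mul_one, mul_zero]
  rw [← Finset.sum_filter]
  have hbij : ∑ J ∈ Finset.univ.filter (fun J : Finset (Fin n) => A ∩ J = {j}), mu δ J
      = ∑ K ∈ Aᶜ.powerset, mu δ (insert j K) := by
    refine Finset.sum_nbij' (fun J => J.erase j) (fun K => insert j K) ?_ ?_ ?_ ?_ ?_
    · intro J hJ
      rw [Finset.mem_filter] at hJ
      rw [Finset.mem_powerset]
      intro i hi
      rw [Finset.mem_erase] at hi
      rw [Finset.mem_compl]
      intro hiA
      have : i ∈ A ∩ J := Finset.mem_inter.mpr ⟨hiA, hi.2⟩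
      rw [hJ.2, Finset.mem_singleton] at this
      exact hi.1 this
    · intro K hK
      rw [Finset.mem_powerset] at hK
      rw [Finset.mem_filter]
      refine ⟨Finset.mem_univ _, ?_⟩
      ext i
      simp only [Finset.mem_inter, Finset.mem_insert, Finset.mem_singleton]
      constructor
      · rintro ⟨hiA, rfl | hiK⟩
        · rfl
        · exact absurd hiA (Finset.mem_compl.mp (hK hiK))
      · rintro rfl
        exact ⟨hj, Or.inl rfl⟩
    · intro J hJ
      rw [Finset.mem_filter] at hJ
      have hjJ : j ∈ J := by
        have : j ∈ A ∩ J := by rw [hJ.2]; exact Finset.mem_singleton_self j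
        exact (Finset.mem_inter.mp this).2
      exact Finset.insert_erase hjJ
    · intro K hK
      rw [Finset.mem_powerset] at hK
      have hjK : j ∉ K := fun h => (Finset.mem_compl.mp (hK h)) hj
      exact Finset.erase_insert hjK
    · intro J hJ
      rw [Finset.mem_filter] at hJ
      have hjJ : j ∈ J := by
        have : j ∈ A ∩ J := by rw [hJ.2]; exact Finset.mem_singleton_self j
        exact (Finset.mem_inter.mp this).2
      rw [Finset.insert_erase hjJ]
  rw [hbij]
  have hcardA : A.card ≤ n := by
    simpa using Finset.card_le_card (Finset.subset_univ A)
  have hA1 : 1 ≤ A.card := Finset.card_pos.mpr ⟨j, hj⟩ 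
  have hmu : ∀ K ∈ Aᶜ.powerset, mu δ (insert j K)
      = (δ * (1-δ)^(A.card - 1)) * (δ^K.card * (1-δ)^(Aᶜ.card - K.card)) := by
    intro K hK
    rw [Finset.mem_powerset] at hK
    have hjK : j ∉ K := fun h => (Finset.mem_compl.mp (hK h)) hj
    have hKcard : K.card ≤ Aᶜ.card := Finset.card_le_card hK
    have hcardAc : Aᶜ.card = n - A.card := by
      simp [Finset.card_compl]
    unfold mu
    rw [Finset.card_insert_of_notMem hjK]
    have he : n - (K.card + 1) = (Aᶜ.card - K.card) + (A.card - 1) := by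
      rw [hcardAc]; rw [hcardAc] at hKcard; omega
    rw [he, pow_add, pow_succ]
    ring
  rw [Finset.sum_congr rfl hmu, ← Finset.mul_sum, powerset_binom, mul_one]

end QM
namespace QM
variable {n : ℕ}

lemma prob_bound (d : ℕ) (hd : 0 < d) (m : ℕ) (h1 : d ≤ m) (h2 : m < 2*d) :
    (1/8 : ℝ) ≤ (m : ℝ) * ((1/(d:ℝ)) * (1 - 1/(d:ℝ))^(m-1)) := by
  rcases eq_or_lt_of_le (Nat.one_le_iff_ne_zero.mpr hd.ne') with hd1 | hd2
  · -- d = 1, so m = 1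
    have hm : m = 1 := by omega
    subst hm
    rw [← hd1]
    norm_num
  · -- d ≥ 2
    have hd2' : (2:ℝ) ≤ d := by exact_mod_cast hd2
    have hdR : (0:ℝ) < d := by linarith
    have hd1R : (0:ℝ) < (d:ℝ) - 1 := by linarith
    set x : ℝ := 1/((d:ℝ)-1) with hx
    have hx0 : 0 < x := by positivity
    -- exp(-x) ≤ 1 - 1/d
    have hexp1 : Real.exp (-x) ≤ 1 - 1/(d:ℝ) := by
      have h := Real.add_one_le_exp x
      have h1x : (0:ℝ) < 1 + x := by linarith
      have hinv : Real.exp (-x) = 1/Real.exp x := by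
        rw [Real.exp_neg]; ring
      rw [hinv]
      rw [div_le_iff₀ (Real.exp_pos x)]
      have hgoal : (1 - 1/(d:ℝ)) * (1+x) = 1 := by
        field_simp [hx]
        rw [hx, mul_add, mul_one, mul_one_div_cancel hd1R.ne']; ring
      calc (1:ℝ) = (1 - 1/(d:ℝ)) * (1+x) := hgoal.symm
        _ ≤ (1 - 1/(d:ℝ)) * Real.exp x := by
            have h' : (1:ℝ) + x ≤ Real.exp x := by linarith
            apply mul_le_mul_of_nonneg_left h'
            have : 1/(d:ℝ) ≤ 1/2 := by
              apply div_le_div_of_nonneg_left <;> linarith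
            linarith
    have hbase0 : (0:ℝ) ≤ 1 - 1/(d:ℝ) := by
      have : 1/(d:ℝ) ≤ 1/2 := by
        apply div_le_div_of_nonneg_left <;> linarith
      linarith
    have hbase1 : 1 - 1/(d:ℝ) ≤ 1 := by
      have : 0 ≤ 1/(d:ℝ) := by positivity
      linarith
    -- (1-1/d)^(m-1) ≥ (1-1/d)^(2d-2) ≥ exp(-x)^(2d-2) = exp(-2)
    have hmono : (1 - 1/(d:ℝ))^(2*d-2) ≤ (1 - 1/(d:ℝ))^(m-1) :=
      pow_le_pow_of_le_one hbase0 hbase1 (by omega)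
    have hpow : Real.exp (-x)^(2*d-2) ≤ (1 - 1/(d:ℝ))^(2*d-2) :=
      pow_le_pow_left₀ (Real.exp_pos _).le hexp1 _
    have hexpval : Real.exp (-x)^(2*d-2) = Real.exp (-2) := by
      rw [← Real.exp_nat_mul]
      congr 1
      have : ((2*d-2 : ℕ) : ℝ) = 2*((d:ℝ)-1) := by
        push_cast [Nat.cast_sub (by omega : 2 ≤ 2*d)]
        ring
      rw [this, hx]
      field_simp
    have hexp2 : (1/8 : ℝ) ≤ Real.exp (-2) := by
      have h8 : Real.exp 2 ≤ 8 := by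
        have he : Real.exp 2 = Real.exp 1 * Real.exp 1 := by
          rw [← Real.exp_add]; norm_num
        nlinarith [Real.exp_one_lt_d9, Real.exp_pos 1]
      rw [Real.exp_neg]
      have hy : 0 < (Real.exp 2)⁻¹ := inv_pos.mpr (Real.exp_pos 2)
      have hc : (Real.exp 2)⁻¹ * Real.exp 2 = 1 := inv_mul_cancel₀ (Real.exp_pos 2).ne'
      nlinarith [mul_nonneg hy.le (by linarith : (0:ℝ) ≤ 8 - Real.exp 2)]
    have hmd : (1:ℝ) ≤ (m:ℝ) * (1/(d:ℝ)) := by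
      rw [mul_one_div, le_div_iff₀ hdR]
      have : (d:ℝ) ≤ (m:ℝ) := Nat.cast_le.mpr h1
      linarith
    have hfinal : (1/8:ℝ) ≤ (1 - 1/(d:ℝ))^(m-1) := le_trans hexp2 (le_trans (hexpval ▸ hpow) hmono)
    have hp0 : (0:ℝ) ≤ (1 - 1/(d:ℝ))^(m-1) := pow_nonneg hbase0 _
    calc (1/8:ℝ) ≤ (1 - 1/(d:ℝ))^(m-1) := hfinal
      _ = 1 * (1 - 1/(d:ℝ))^(m-1) := (one_mul _).symm
      _ ≤ ((m:ℝ) * (1/(d:ℝ))) * (1 - 1/(d:ℝ))^(m-1) := by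
          apply mul_le_mul_of_nonneg_right hmd hp0
      _ = (m : ℝ) * ((1/(d:ℝ)) * (1 - 1/(d:ℝ))^(m-1)) := by ring

end QM

open QM

/-- For a random subset `J ⊆ [n]` with inclusion probability `1/d`,
`𝔼_J[Σ_{j∈J} ‖R_j^J(T)‖₂²] ≥ (1/8) Σ_{d ≤ |supp(s)| < 2d} |T̂(s)|²`. -/
theorem rr_spectrum {n : ℕ} (d : ℕ) (hd : 0 < d) (T : QM n) (hT : QM.opnorm T ≤ 1) :
    (1 / 8 : ℝ) * QM.Wapprox T d ≤
      ∑ J : Finset (Fin n), QM.mu (1 / (d : ℝ)) J * ∑ j ∈ J, QM.l2sq (QM.RR J j T) := by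
  classical
  set δ : ℝ := 1/(d:ℝ) with hδ
  have hd1 : (1:ℝ) ≤ (d:ℝ) := by exact_mod_cast hd
  have hδ0 : (0:ℝ) ≤ δ := by positivity
  have hδ1 : δ ≤ 1 := by rw [hδ, div_le_one (by linarith)]; linarith
  have hmu0 : ∀ J : Finset (Fin n), 0 ≤ mu δ J := fun J =>
    mul_nonneg (pow_nonneg hδ0 _) (pow_nonneg (by linarith) _)
  have hstep1 : ∀ J : Finset (Fin n), (∑ j ∈ J, l2sq (RR J j T))
      = ∑ s : Fin n → Fin 4, ‖fc T s‖^2 *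
          ∑ j ∈ supp s, (if supp s ∩ J = {j} then (1:ℝ) else 0) := by
    intro J
    calc (∑ j ∈ J, l2sq (RR J j T))
        = ∑ j ∈ J, ∑ s : Fin n → Fin 4,
            (if supp s ∩ J = {j} then ‖fc T s‖^2 else 0) := by
          refine Finset.sum_congr rfl fun j hj => ?_
          rw [l2sq_RR, Finset.sum_filter]
          exact Finset.sum_congr rfl fun s _ => if_congr (cond_iff hj s) rfl rfl
      _ = ∑ s : Fin n → Fin 4, ∑ j ∈ J,
            (if supp s ∩ J = {j} then ‖fc T s‖^2 else 0) := Finset.sum_comm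
      _ = ∑ s : Fin n → Fin 4, ∑ j ∈ supp s,
            (if supp s ∩ J = {j} then ‖fc T s‖^2 else 0) :=
          Finset.sum_congr rfl fun s _ => sum_ite_inter (supp s) J _
      _ = ∑ s : Fin n → Fin 4, ‖fc T s‖^2 *
            ∑ j ∈ supp s, (if supp s ∩ J = {j} then (1:ℝ) else 0) := by
          refine Finset.sum_congr rfl fun s _ => ?_
          rw [Finset.mul_sum]
          exact Finset.sum_congr rfl fun j _ => by rw [mul_ite, mul_one, mul_zero]
  have hswap : (∑ J : Finset (Fin n), mu δ J * ∑ j ∈ J, l2sq (RR J j T))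
      = ∑ s : Fin n → Fin 4, ‖fc T s‖^2 *
          ∑ j ∈ supp s, ∑ J : Finset (Fin n),
            mu δ J * (if supp s ∩ J = {j} then (1:ℝ) else 0) := by
    calc (∑ J : Finset (Fin n), mu δ J * ∑ j ∈ J, l2sq (RR J j T))
        = ∑ J : Finset (Fin n), ∑ s : Fin n → Fin 4, ‖fc T s‖^2 *
            (mu δ J * ∑ j ∈ supp s, (if supp s ∩ J = {j} then (1:ℝ) else 0)) := by
          refine Finset.sum_congr rfl fun J _ => ?_
          rw [hstep1 J, Finset.mul_sum]
          exact Finset.sum_congr rfl fun s _ => by ring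
      _ = ∑ s : Fin n → Fin 4, ∑ J : Finset (Fin n), ‖fc T s‖^2 *
            (mu δ J * ∑ j ∈ supp s, (if supp s ∩ J = {j} then (1:ℝ) else 0)) :=
          Finset.sum_comm
      _ = ∑ s : Fin n → Fin 4, ‖fc T s‖^2 *
            ∑ j ∈ supp s, ∑ J : Finset (Fin n),
              mu δ J * (if supp s ∩ J = {j} then (1:ℝ) else 0) := by
          refine Finset.sum_congr rfl fun s _ => ?_
          rw [← Finset.mul_sum]
          congr 1
          rw [Finset.sum_comm]
          refine Finset.sum_congr rfl fun J _ => ?_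
          rw [Finset.mul_sum]
  rw [hswap]
  unfold Wapprox
  rw [Finset.mul_sum]
  refine le_trans (Finset.sum_le_sum ?_)
    (Finset.sum_le_sum_of_subset_of_nonneg (Finset.filter_subset _ _) ?_)
  · intro s hs
    rw [Finset.mem_filter] at hs
    have hQ : (1/8:ℝ) ≤ ∑ j ∈ supp s, ∑ J : Finset (Fin n),
        mu δ J * (if supp s ∩ J = {j} then (1:ℝ) else 0) := by
      rw [Finset.sum_congr rfl (fun j hj => prob_single δ (supp s) j hj),
        Finset.sum_const, nsmul_eq_mul]
      exact prob_bound d hd _ hs.2.1 hs.2.2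
    have hc2 : (0:ℝ) ≤ ‖fc T s‖^2 := sq_nonneg _
    calc (1/8:ℝ) * ‖fc T s‖^2 = ‖fc T s‖^2 * (1/8) := by ring
      _ ≤ _ := mul_le_mul_of_nonneg_left hQ hc2
  · intro s _ _
    refine mul_nonneg (sq_nonneg _) (Finset.sum_nonneg fun j _ =>
      Finset.sum_nonneg fun J _ => mul_nonneg (hmu0 J) ?_)
    split <;> norm_num
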